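/- Let n be a positive integer and let (a_0, b_0), (a_1, b_1), (a_2, b_2) be pairs of coprime positive integers such that a_1(a_0 + b_0) + b_1 b_0 = n and (a_2, b_2) = (a_0 + b_0 − b_1, a_1 + b_1 − a_0). Then either all three pairs are equal to (a_0, b_0), or the three pairs are pairwise distinct and form an n-Farey triple. -/
import Mathlib


/-- An `n`-Farey triple: three pairwise distinct pairs `(aᵢ, bᵢ)` of coprime positive
integers with `a_{i+1} (aᵢ + bᵢ) + b_{i+1} bᵢ = n` for each `i` (indices mod 3). -/
def IsFareyTriple (n : ℕ) (P : Fin 3 → ℕ × ℕ) : Prop :=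
  (∀ i, 0 < (P i).1 ∧ 0 < (P i).2 ∧ Nat.Coprime (P i).1 (P i).2) ∧
  Function.Injective P ∧
  ∀ i : Fin 3, (P (i + 1)).1 * ((P i).1 + (P i).2) + (P (i + 1)).2 * (P i).2 = n

/-- **Lemma.** Let `(a₀, b₀), (a₁, b₁), (a₂, b₂)` be pairs of coprime positive integers with
`a₁ (a₀ + b₀) + b₁ b₀ = n` and `(a₂, b₂) = (a₀ + b₀ − b₁, a₁ + b₁ − a₀)`. Then either all
three pairs equal `(a₀, b₀)`, or they are pairwise distinct and form an `n`-Farey triple. -/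
theorem stmt10 (n : ℕ) (hn : 0 < n) (a₀ b₀ a₁ b₁ a₂ b₂ : ℕ)
    (h₀ : 0 < a₀ ∧ 0 < b₀ ∧ Nat.Coprime a₀ b₀)
    (h₁ : 0 < a₁ ∧ 0 < b₁ ∧ Nat.Coprime a₁ b₁)
    (h₂ : 0 < a₂ ∧ 0 < b₂ ∧ Nat.Coprime a₂ b₂)
    (heq : a₁ * (a₀ + b₀) + b₁ * b₀ = n)
    (ha₂ : (a₂ : ℤ) = (a₀ : ℤ) + b₀ - b₁)
    (hb₂ : (b₂ : ℤ) = (a₁ : ℤ) + b₁ - a₀) :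
    ((a₁, b₁) = (a₀, b₀) ∧ (a₂, b₂) = (a₀, b₀)) ∨
      IsFareyTriple n ![(a₀, b₀), (a₁, b₁), (a₂, b₂)] := by
  by_cases h : a₁ = a₀ ∧ b₁ = b₀
  · left
    obtain ⟨h1, h2⟩ := h
    constructor
    · simp [h1, h2]
    · have : a₂ = a₀ ∧ b₂ = b₀ := by constructor <;> omega
      simp [this.1, this.2]
  · right
    have ne10 : ¬(a₁ = a₀ ∧ b₁ = b₀) := h
    have ne20 : ¬(a₂ = a₀ ∧ b₂ = b₀) := by
      rintro ⟨e1, e2⟩; exact ne10 ⟨by omega, by omega⟩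
    have ne21 : ¬(a₂ = a₁ ∧ b₂ = b₁) := by
      rintro ⟨e1, e2⟩; exact ne10 ⟨by omega, by omega⟩
    refine ⟨?_, ?_, ?_⟩
    · intro i
      fin_cases i <;> simpa using ‹_›
    · intro i j hij
      fin_cases i <;> fin_cases j <;>
        simp [Prod.ext_iff] at hij ⊢ <;>
        first
          | rfl
          | (exfalso; omega)
    · have heqZ : (a₁ : ℤ) * (a₀ + b₀) + b₁ * b₀ = n := by exact_mod_cast heq
      intro i
      fin_cases i <;> simp [Fin.isValue, Matrix.cons_val_zero, Matrix.cons_val_one]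
      · exact heq
      · have : (a₂ : ℤ) * (a₁ + b₁) + b₂ * b₁ = n := by
          rw [ha₂, hb₂]; linarith [heqZ]
        exact_mod_cast this
      · have : (a₀ : ℤ) * (a₂ + b₂) + b₀ * b₂ = n := by
          rw [ha₂, hb₂]; ring_nf; ring_nf at heqZ; linarith
        exact_mod_cast this
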